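/- For a vector SD = a·i + b·j + c·k in the triangular grid, the graph distance from S to D equals min(|a−c| + |b−c|, |a−b| + |b−c|, |a−b| + |a−c|). -/

import Mathlib

def triGraph : SimpleGraph (ℤ × ℤ) where
  Adj u v := (u.1 - v.1 = 1 ∧ u.2 - v.2 = 0) ∨ (u.1 - v.1 = -1 ∧ u.2 - v.2 = 0) ∨
    (u.1 - v.1 = 0 ∧ u.2 - v.2 = 1) ∨ (u.1 - v.1 = 0 ∧ u.2 - v.2 = -1) ∨
    (u.1 - v.1 = 1 ∧ u.2 - v.2 = 1) ∨ (u.1 - v.1 = -1 ∧ u.2 - v.2 = -1)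
  symm := ⟨by intro u v h; omega⟩
  loopless := ⟨by intro v h; omega⟩

def triVec (a b c : ℤ) : ℤ × ℤ := a • ((1 : ℤ), (0 : ℤ)) + b • ((0 : ℤ), (1 : ℤ)) + c • ((-1 : ℤ), (-1 : ℤ))

lemma triGraph_adj (u v : ℤ × ℤ) : triGraph.Adj u v ↔
    ((u.1 - v.1 = 1 ∧ u.2 - v.2 = 0) ∨ (u.1 - v.1 = -1 ∧ u.2 - v.2 = 0) ∨
    (u.1 - v.1 = 0 ∧ u.2 - v.2 = 1) ∨ (u.1 - v.1 = 0 ∧ u.2 - v.2 = -1) ∨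
    (u.1 - v.1 = 1 ∧ u.2 - v.2 = 1) ∨ (u.1 - v.1 = -1 ∧ u.2 - v.2 = -1)) := Iff.rfl

def triPot (d : ℤ × ℤ) : ℤ := max |d.1| (max |d.2| |d.1 - d.2|)

set_option maxHeartbeats 1000000 in
lemma triPot_lower : ∀ {u v : ℤ × ℤ} (p : triGraph.Walk u v), triPot (v - u) ≤ p.length := by
  intro u v p
  induction p with
  | nil => simp [triPot]
  | @cons u w v h q ih =>
    rw [triGraph_adj] at h
    simp only [SimpleGraph.Walk.length_cons]
    simp only [triPot, Prod.fst_sub, Prod.snd_sub, Int.abs_eq_natAbs] at *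

    omega

lemma triWalk_exists (n : ℕ) : ∀ (d : ℤ × ℤ), triPot d ≤ n → ∀ S : ℤ × ℤ,
    ∃ p : triGraph.Walk S (S + d), p.length ≤ n := by
  induction n with
  | zero =>
    intro d hd S
    have h1 : d.1 = 0 ∧ d.2 = 0 := by
      simp only [triPot, Int.abs_eq_natAbs] at hd; omega
    have h0 : d = 0 := Prod.ext h1.1 h1.2
    subst h0
    exact ⟨(SimpleGraph.Walk.nil).copy rfl (by simp), by simp⟩
  | succ n ih =>
    intro d hd S
    by_cases h0 : d = 0
    · subst h0
      exact ⟨(SimpleGraph.Walk.nil).copy rfl (by simp), by simp⟩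
    · have hne : d.1 ≠ 0 ∨ d.2 ≠ 0 := by
        by_contra hc
        push_neg at hc
        exact h0 (Prod.ext hc.1 hc.2)
      obtain ⟨m, hadj, hred⟩ :
          ∃ m : ℤ × ℤ, triGraph.Adj S (S + m) ∧ triPot (d - m) ≤ n := by
        simp only [triPot, Int.abs_eq_natAbs] at hd
        rcases lt_trichotomy d.1 0 with h1 | h1 | h1
        · rcases lt_trichotomy d.2 0 with h2 | h2 | h2
          · exact ⟨(-1, -1), by simp [triGraph_adj],
              by simp only [triPot, Prod.fst_sub, Prod.snd_sub, Int.abs_eq_natAbs]; omega⟩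
          · exact ⟨(-1, 0), by simp [triGraph_adj],
              by simp only [triPot, Prod.fst_sub, Prod.snd_sub, Int.abs_eq_natAbs]; omega⟩
          · exact ⟨(-1, 0), by simp [triGraph_adj],
              by simp only [triPot, Prod.fst_sub, Prod.snd_sub, Int.abs_eq_natAbs]; omega⟩
        · rcases lt_trichotomy d.2 0 with h2 | h2 | h2
          · exact ⟨(0, -1), by simp [triGraph_adj],
              by simp only [triPot, Prod.fst_sub, Prod.snd_sub, Int.abs_eq_natAbs]; omega⟩
          · omega
          · exact ⟨(0, 1), by simp [triGraph_adj],
              by simp only [triPot, Prod.fst_sub, Prod.snd_sub, Int.abs_eq_natAbs]; omega⟩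
        · rcases lt_trichotomy d.2 0 with h2 | h2 | h2
          · exact ⟨(1, 0), by simp [triGraph_adj],
              by simp only [triPot, Prod.fst_sub, Prod.snd_sub, Int.abs_eq_natAbs]; omega⟩
          · exact ⟨(1, 0), by simp [triGraph_adj],
              by simp only [triPot, Prod.fst_sub, Prod.snd_sub, Int.abs_eq_natAbs]; omega⟩
          · exact ⟨(1, 1), by simp [triGraph_adj],
              by simp only [triPot, Prod.fst_sub, Prod.snd_sub, Int.abs_eq_natAbs]; omega⟩
      obtain ⟨q, hq⟩ := ih (d - m) hred (S + m)
      refine ⟨SimpleGraph.Walk.cons hadj (q.copy rfl (by abel)), ?_⟩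
      simpa using Nat.succ_le_succ hq

/-- For a vector `SD = a·i + b·j + c·k` the graph distance from `S` to `D` equals
`min(|a−c| + |b−c|, |a−b| + |b−c|, |a−b| + |a−c|)`. -/
theorem triGraph_dist_formula (S : ℤ × ℤ) (a b c : ℤ) :
    triGraph.dist S (S + triVec a b c) =
      (min (|a - c| + |b - c|) (min (|a - b| + |b - c|) (|a - b| + |a - c|))).toNat := by
  set d : ℤ × ℤ := triVec a b c with hdv
  have hd1 : d.1 = a - c := by simp [hdv, triVec]; ring
  have hd2 : d.2 = b - c := by simp [hdv, triVec]; ring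
  have hpot : triPot d = min (|a - c| + |b - c|) (min (|a - b| + |b - c|) (|a - b| + |a - c|)) := by
    simp only [triPot, hd1, hd2, Int.abs_eq_natAbs]
    omega
  have hpos : 0 ≤ triPot d := by
    have := abs_nonneg d.1
    simp only [triPot]; omega
  obtain ⟨p, hp⟩ := triWalk_exists (triPot d).toNat d (by omega) S
  have hub : triGraph.dist S (S + d) ≤ (triPot d).toNat :=
    le_trans (SimpleGraph.dist_le p) hp
  have hreach : triGraph.Reachable S (S + d) := ⟨p⟩
  obtain ⟨q, hq⟩ := hreach.exists_walk_length_eq_dist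
  have hlb : triPot d ≤ triGraph.dist S (S + d) := by
    have h := triPot_lower q
    have hsub : (S + d) - S = d := by abel
    rw [hsub, hq] at h
    exact h
  rw [← hpot]
  omega
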